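/- arXiv:2310.00817 — 6 statements merged into one kernel-verified Lean document; each statement's English description precedes it below -/
import Mathlib

section
/- Monotonicity of the optimal human–machine value in the adherence level: let θ1, θ2 : S×A → [0,1] be two adherence levels such that θ1(s,a) ≥ θ2(s,a) for all (s,a) ∈ S×A, and assume in addition that θ2(s,a) ≥ π^H_h(a|s) for all h ∈ {1,…,H}, s ∈ S, a ∈ A. Writing V*_h(s|θ) for the optimal value computed with adherence level θ (all other data p, r, π^H fixed), it holds that V*_h(s|θ1) ≥ V*_h(s|θ2) for every state s ∈ S and every stage h ∈ {1,…,H}. -/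
open Finset

noncomputable section

variable {S A B : Type*}

/-- Human action distribution `ℙ_h(a|s,a^M)` given machine advice (`none` = defer). -/
def Pact [DecidableEq A] (piH : ℕ → S → A → ℝ) (θ : S → A → ℝ)
    (h : ℕ) (s : S) (aM : Option A) (a : A) : ℝ :=
  match aM with
  | Option.none => piH h s a
  | Option.some b => if a = b then θ s b else (1 - θ s b) * piH h s a / (1 - piH h s b)

/-- Machine transition kernel `p^M_h(s'|s,a^M)`. -/
def pM [Fintype A] [DecidableEq A] (p : ℕ → S → A → S → ℝ) (piH : ℕ → S → A → ℝ)
    (θ : S → A → ℝ) (h : ℕ) (s : S) (aM : Option A) (s' : S) : ℝ :=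
  ∑ a : A, p h s a s' * Pact piH θ h s aM a

/-- Machine reward `r^M_h(s,a^M)`. -/
def rM [Fintype A] [DecidableEq A] (r : ℕ → S → A → ℝ) (piH : ℕ → S → A → ℝ)
    (θ : S → A → ℝ) (h : ℕ) (s : S) (aM : Option A) : ℝ :=
  ∑ a : A, r h s a * Pact piH θ h s aM a

/-- Indicator of advising (`a^M ≠ defer`). -/
def indAdv : Option A → ℝ := fun aM => match aM with
  | Option.none => 0
  | Option.some _ => 1

/-- The β-penalized machine reward `r^M_{h,β}(s,a) = r^M_h(s,a) − β·1{a ≠ defer}`. -/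
def rMpen [Fintype A] [DecidableEq A] (r : ℕ → S → A → ℝ) (piH : ℕ → S → A → ℝ)
    (θ : S → A → ℝ) (β : ℝ) (h : ℕ) (s : S) (aM : Option A) : ℝ :=
  rM r piH θ h s aM - β * indAdv aM

/-- The always-defer policy. -/
def deferPol : ℕ → S → Option A := fun _ _ => Option.none

/-- Value with `k` remaining steps starting at stage `h`. -/
def Vfuel [Fintype S] (P : ℕ → S → B → S → ℝ) (R : ℕ → S → B → ℝ)
    (pol : ℕ → S → B) : ℕ → ℕ → S → ℝ
  | _, 0, _ => 0
  | h, k + 1, s =>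
      R h s (pol h s) + ∑ s' : S, P h s (pol h s) s' * Vfuel P R pol (h + 1) k s'

/-- Value function `V^π_h(s)` of a deterministic Markov policy with horizon `H`:
`V^π_{H+1} = 0` and `V^π_h(s) = R_h(s,π_h(s)) + Σ_{s'} P_h(s'|s,π_h(s)) V^π_{h+1}(s')`. -/
def Vval [Fintype S] (H : ℕ) (P : ℕ → S → B → S → ℝ) (R : ℕ → S → B → ℝ)
    (pol : ℕ → S → B) (h : ℕ) (s : S) : ℝ :=
  Vfuel P R pol h (H + 1 - h) s

/-- Optimal value function: supremum over deterministic Markov policies. -/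
def Vstar [Fintype S] (H : ℕ) (P : ℕ → S → B → S → ℝ) (R : ℕ → S → B → ℝ)
    (h : ℕ) (s : S) : ℝ :=
  ⨆ pol : ℕ → S → B, Vval H P R pol h s

/-- Optimal Q-function `Q*_h(s,b) = R_h(s,b) + Σ_{s'} P_h(s'|s,b) V*_{h+1}(s')`. -/
def Qstar [Fintype S] (H : ℕ) (P : ℕ → S → B → S → ℝ) (R : ℕ → S → B → ℝ)
    (h : ℕ) (s : S) (b : B) : ℝ :=
  R h s b + ∑ s' : S, P h s b s' * Vstar H P R (h + 1) s'

/-- Q-function of a policy with `k` remaining steps. -/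
def Qfuel [Fintype S] (P : ℕ → S → B → S → ℝ) (R : ℕ → S → B → ℝ)
    (pol : ℕ → S → B) : ℕ → ℕ → S → B → ℝ
  | _, 0, _, _ => 0
  | h, k + 1, s, b =>
      R h s b + ∑ s' : S, P h s b s' * Qfuel P R pol (h + 1) k s' (pol (h + 1) s')

/-- Q-function `Q^π_h(s,b)` of a policy with horizon `H` (`Q^π_{H+1} = 0`). -/
def Qval [Fintype S] (H : ℕ) (P : ℕ → S → B → S → ℝ) (R : ℕ → S → B → ℝ)
    (pol : ℕ → S → B) (h : ℕ) (s : S) (b : B) : ℝ :=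
  Qfuel P R pol h (H + 1 - h) s b

end

noncomputable section AuxOpt

open Finset

variable {S A B : Type*}

/-- Optimal value with `k` remaining steps, via backward induction (value iteration). -/
def VoptF [Fintype S] [Fintype B] [Nonempty B]
    (P : ℕ → S → B → S → ℝ) (R : ℕ → S → B → ℝ) : ℕ → ℕ → S → ℝ
  | 0, _, _ => 0
  | k + 1, h, s => Finset.univ.sup' Finset.univ_nonempty
      (fun b => R h s b + ∑ s' : S, P h s b s' * VoptF P R k (h + 1) s')

lemma Vfuel_agree [Fintype S] (P : ℕ → S → B → S → ℝ) (R : ℕ → S → B → ℝ)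
    (pol pol' : ℕ → S → B) :
    ∀ (k h : ℕ), (∀ h', h ≤ h' → ∀ s, pol h' s = pol' h' s) →
      ∀ s, Vfuel P R pol h k s = Vfuel P R pol' h k s := by
  intro k
  induction k with
  | zero => intro h _ s; rfl
  | succ k ih =>
      intro h hag s
      simp only [Vfuel]
      rw [hag h le_rfl s]
      congr 1
      refine Finset.sum_congr rfl fun s' _ => ?_
      rw [ih (h + 1) (fun h' hh' s => hag h' (by omega) s) s']

lemma Vfuel_le_VoptF [Fintype S] [Fintype B] [Nonempty B]
    (P : ℕ → S → B → S → ℝ) (R : ℕ → S → B → ℝ) :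
    ∀ (k h : ℕ), (∀ h', h ≤ h' → h' < h + k → ∀ (s : S) (b : B) (s' : S), 0 ≤ P h' s b s') →
      ∀ (pol : ℕ → S → B) (s : S), Vfuel P R pol h k s ≤ VoptF P R k h s := by
  intro k
  induction k with
  | zero => intro h _ pol s; simp [Vfuel, VoptF]
  | succ k ih =>
      intro h hP pol s
      simp only [Vfuel, VoptF]
      refine le_trans ?_ (Finset.le_sup' (b := pol h s)
        (fun b => R h s b + ∑ s' : S, P h s b s' * VoptF P R k (h + 1) s') (Finset.mem_univ _))
      gcongr with s' _
      · exact hP h le_rfl (by omega) s (pol h s) s'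
      · exact ih (h + 1) (fun h' h1 h2 => hP h' (by omega) (by omega)) pol s'

lemma exists_opt_pol [Fintype S] [Fintype B] [Nonempty B]
    (P : ℕ → S → B → S → ℝ) (R : ℕ → S → B → ℝ) :
    ∀ (k h : ℕ), ∃ pol : ℕ → S → B, ∀ s, Vfuel P R pol h k s = VoptF P R k h s := by
  intro k
  induction k with
  | zero => exact fun h => ⟨fun _ _ => Classical.arbitrary B, fun s => rfl⟩
  | succ k ih =>
      intro h
      obtain ⟨pol', hpol'⟩ := ih (h + 1)
      have hsel : ∀ s : S, ∃ b : B,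
          (Finset.univ.sup' Finset.univ_nonempty
            (fun b => R h s b + ∑ s' : S, P h s b s' * VoptF P R k (h + 1) s'))
          = R h s b + ∑ s' : S, P h s b s' * VoptF P R k (h + 1) s' := by
        intro s
        obtain ⟨b, _, hb⟩ := Finset.exists_mem_eq_sup' (Finset.univ_nonempty)
          (fun b => R h s b + ∑ s' : S, P h s b s' * VoptF P R k (h + 1) s')
        exact ⟨b, hb⟩
      choose bs hbs using hsel
      refine ⟨fun h' => if h' = h then bs else pol' h', fun s => ?_⟩
      simp only [Vfuel, VoptF, if_pos rfl, eq_self_iff_true, if_true]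
      rw [hbs s]
      congr 1
      refine Finset.sum_congr rfl fun s' _ => ?_
      rw [Vfuel_agree P R _ pol' k (h + 1) (fun h' hh' s => by
        simp [Nat.ne_of_gt (by omega : h < h')]) s', hpol' s']

lemma Vstar_eq_VoptF [Fintype S] [Fintype B] [Nonempty B]
    (H : ℕ) (P : ℕ → S → B → S → ℝ) (R : ℕ → S → B → ℝ) (h : ℕ) (s : S)
    (hP : ∀ h', h ≤ h' → h' < h + (H + 1 - h) → ∀ (s : S) (b : B) (s' : S), 0 ≤ P h' s b s') :
    Vstar H P R h s = VoptF P R (H + 1 - h) h s := by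
  have hbdd : BddAbove (Set.range fun pol : ℕ → S → B => Vval H P R pol h s) := by
    refine ⟨VoptF P R (H + 1 - h) h s, ?_⟩
    rintro x ⟨pol, rfl⟩
    exact Vfuel_le_VoptF P R _ h hP pol s
  refine le_antisymm (ciSup_le fun pol => Vfuel_le_VoptF P R _ h hP pol s) ?_
  obtain ⟨pol, hpol⟩ := exists_opt_pol P R (H + 1 - h) h
  calc VoptF P R (H + 1 - h) h s = Vval H P R pol h s := (hpol s).symm
    _ ≤ _ := le_ciSup hbdd pol

end AuxOpt

section AuxCouple

open Finset

variable {S A : Type*} [Fintype S] [Fintype A] [DecidableEq A]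

lemma Pact_nonneg (piH : ℕ → S → A → ℝ) (θ : S → A → ℝ) (h : ℕ) (s : S)
    (hθ : ∀ b, 0 ≤ θ s b ∧ θ s b ≤ 1) (hpi : ∀ a, 0 ≤ piH h s a)
    (hlt : ∀ a, piH h s a < 1) (aM : Option A) (a : A) :
    0 ≤ Pact piH θ h s aM a := by
  cases aM with
  | none => exact hpi a
  | some b =>
      simp only [Pact]
      by_cases hab : a = b
      · simp [hab, (hθ b).1]
      · simp only [if_neg hab]
        apply div_nonneg
        · exact mul_nonneg (by linarith [(hθ b).2]) (hpi a)
        · linarith [hlt b]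

lemma Pact_couple (piH : ℕ → S → A → ℝ) (θ1 θ2 : S → A → ℝ) (h : ℕ) (s : S) (b : A)
    (hq1 : piH h s b < 1) (h1le : θ1 s b ≤ 1) (hm : θ2 s b ≤ θ1 s b)
    (hge : piH h s b ≤ θ2 s b) :
    ∃ lam : ℝ, 0 ≤ lam ∧ lam ≤ 1 ∧ ∀ a : A,
      Pact piH θ2 h s (some b) a
        = lam * Pact piH θ1 h s (some b) a + (1 - lam) * piH h s a := by
  by_cases hc : θ1 s b = piH h s b
  · refine ⟨1, by norm_num, le_refl 1, fun a => ?_⟩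
    have h2 : θ2 s b = θ1 s b := le_antisymm hm (hc ▸ hge)
    simp [Pact, h2]
  · have hlt : piH h s b < θ1 s b := lt_of_le_of_ne (le_trans hge hm) (Ne.symm hc)
    have hd : θ1 s b - piH h s b ≠ 0 := by linarith
    refine ⟨(θ2 s b - piH h s b) / (θ1 s b - piH h s b),
      div_nonneg (by linarith) (by linarith),
      by rw [div_le_one (by linarith)]; linarith, fun a => ?_⟩
    simp only [Pact]
    by_cases hab : a = b
    · subst hab
      simp only [if_pos rfl, eq_self_iff_true, if_true]
      field_simp
      ring
    · simp only [if_neg hab]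
      have hne : (1 : ℝ) - piH h s b ≠ 0 := by linarith
      field_simp
      ring

lemma rM_couple (r : ℕ → S → A → ℝ) (piH : ℕ → S → A → ℝ) (θ1 θ2 : S → A → ℝ)
    (h : ℕ) (s : S) (b : A) (lam : ℝ)
    (hP : ∀ a : A, Pact piH θ2 h s (some b) a
        = lam * Pact piH θ1 h s (some b) a + (1 - lam) * piH h s a) :
    rM r piH θ2 h s (some b)
      = lam * rM r piH θ1 h s (some b) + (1 - lam) * rM r piH θ1 h s none := by
  simp only [rM, Pact, Finset.mul_sum, ← Finset.sum_add_distrib]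
  refine Finset.sum_congr rfl fun a _ => ?_
  have := hP a
  simp only [Pact] at this
  rw [this]; ring

lemma pM_couple (p : ℕ → S → A → S → ℝ) (piH : ℕ → S → A → ℝ) (θ1 θ2 : S → A → ℝ)
    (h : ℕ) (s : S) (b : A) (lam : ℝ) (s' : S)
    (hP : ∀ a : A, Pact piH θ2 h s (some b) a
        = lam * Pact piH θ1 h s (some b) a + (1 - lam) * piH h s a) :
    pM p piH θ2 h s (some b) s'
      = lam * pM p piH θ1 h s (some b) s' + (1 - lam) * pM p piH θ1 h s none s' := by
  simp only [pM, Pact, Finset.mul_sum, ← Finset.sum_add_distrib]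
  refine Finset.sum_congr rfl fun a _ => ?_
  have := hP a
  simp only [Pact] at this
  rw [this]; ring

lemma rM_defer_eq (r : ℕ → S → A → ℝ) (piH : ℕ → S → A → ℝ) (θ1 θ2 : S → A → ℝ)
    (h : ℕ) (s : S) : rM r piH θ2 h s none = rM r piH θ1 h s none := rfl

lemma pM_defer_eq (p : ℕ → S → A → S → ℝ) (piH : ℕ → S → A → ℝ) (θ1 θ2 : S → A → ℝ)
    (h : ℕ) (s : S) (s' : S) : pM p piH θ2 h s none s' = pM p piH θ1 h s none s' := rfl

end AuxCouple

/-- Proposition 2: monotonicity of the optimal human–machine value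
in the adherence level. -/
theorem adherence_monotonicity
    {S A : Type*} [Fintype S] [Fintype A] [Nonempty S] [Nonempty A] [DecidableEq A]
    (H : ℕ) (hH : 1 ≤ H)
    (p : ℕ → S → A → S → ℝ) (r : ℕ → S → A → ℝ) (piH : ℕ → S → A → ℝ)
    (hp : ∀ h, 1 ≤ h → h ≤ H → ∀ (s : S) (a : A),
      (∀ s' : S, 0 ≤ p h s a s') ∧ ∑ s' : S, p h s a s' = 1)
    (hr : ∀ h, 1 ≤ h → h ≤ H → ∀ (s : S) (a : A), 0 ≤ r h s a ∧ r h s a ≤ 1)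
    (hpiH : ∀ h, 1 ≤ h → h ≤ H → ∀ s : S,
      (∀ a : A, 0 ≤ piH h s a) ∧ ∑ a : A, piH h s a = 1)
    (hpiHlt : ∀ h, 1 ≤ h → h ≤ H → ∀ (s : S) (a : A), piH h s a < 1)
    (θ1 θ2 : S → A → ℝ)
    (hθ1 : ∀ (s : S) (a : A), 0 ≤ θ1 s a ∧ θ1 s a ≤ 1)
    (hθ2 : ∀ (s : S) (a : A), 0 ≤ θ2 s a ∧ θ2 s a ≤ 1)
    (hmono : ∀ (s : S) (a : A), θ2 s a ≤ θ1 s a)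
    (hadh : ∀ h, 1 ≤ h → h ≤ H → ∀ (s : S) (a : A), piH h s a ≤ θ2 s a) :
    ∀ (s : S) (h : ℕ), 1 ≤ h → h ≤ H →
      Vstar H (pM p piH θ2) (rM r piH θ2) h s ≤ Vstar H (pM p piH θ1) (rM r piH θ1) h s := by
  -- nonnegativity of the machine kernels on the relevant stages
  have hpMnn : ∀ (θ : S → A → ℝ), (∀ (s : S) (a : A), 0 ≤ θ s a ∧ θ s a ≤ 1) →
      ∀ h', 1 ≤ h' → h' ≤ H → ∀ (s : S) (b : Option A) (s' : S),
        0 ≤ pM p piH θ h' s b s' := by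
    intro θ hθ h' h1 h2 s b s'
    refine Finset.sum_nonneg fun a _ => mul_nonneg ((hp h' h1 h2 s a).1 s') ?_
    exact Pact_nonneg piH θ h' s (fun b => hθ s b) (fun a => (hpiH h' h1 h2 s).1 a)
      (fun a => hpiHlt h' h1 h2 s a) b a
  -- key monotonicity for the value-iteration operator
  have key : ∀ (k h : ℕ), 1 ≤ h → h + k ≤ H + 1 → ∀ s : S,
      VoptF (pM p piH θ2) (rM r piH θ2) k h s
        ≤ VoptF (pM p piH θ1) (rM r piH θ1) k h s := by
    intro k
    induction k with
    | zero => intro h _ _ s; simp [VoptF]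
    | succ k ih =>
        intro h hh1 hhk s
        have hhH : h ≤ H := by omega
        simp only [VoptF]
        refine Finset.sup'_le _ _ fun b _ => ?_
        have step1 : ∑ s' : S, pM p piH θ2 h s b s' * VoptF (pM p piH θ2) (rM r piH θ2) k (h + 1) s'
            ≤ ∑ s' : S, pM p piH θ2 h s b s' * VoptF (pM p piH θ1) (rM r piH θ1) k (h + 1) s' := by
          refine Finset.sum_le_sum fun s' _ => ?_
          exact mul_le_mul_of_nonneg_left (ih (h + 1) (by omega) (by omega) s')
            (hpMnn θ2 hθ2 h hh1 hhH s b s')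
        set F : Option A → ℝ := fun b =>
          rM r piH θ1 h s b + ∑ s' : S, pM p piH θ1 h s b s' *
            VoptF (pM p piH θ1) (rM r piH θ1) k (h + 1) s' with hF
        have hFle : ∀ b : Option A, F b ≤ Finset.univ.sup' Finset.univ_nonempty F :=
          fun b => Finset.le_sup' F (Finset.mem_univ b)
        refine le_trans (add_le_add le_rfl step1) ?_
        cases b with
        | none =>
            rw [rM_defer_eq r piH θ1 θ2 h s,
              show (∑ s' : S, pM p piH θ2 h s none s' *
                  VoptF (pM p piH θ1) (rM r piH θ1) k (h + 1) s')
                = ∑ s' : S, pM p piH θ1 h s none s' *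
                  VoptF (pM p piH θ1) (rM r piH θ1) k (h + 1) s' from
                Finset.sum_congr rfl fun s' _ => by
                  rw [pM_defer_eq p piH θ1 θ2 h s s']]
            exact hFle none
        | some a =>
            obtain ⟨lam, hl0, hl1, hP⟩ := Pact_couple piH θ1 θ2 h s a
              (hpiHlt h hh1 hhH s a) (hθ1 s a).2 (hmono s a) (hadh h hh1 hhH s a)
            have hr' : rM r piH θ2 h s (some a)
                = lam * rM r piH θ1 h s (some a) + (1 - lam) * rM r piH θ1 h s none :=
              rM_couple r piH θ1 θ2 h s a lam hP
            have hsum : ∑ s' : S, pM p piH θ2 h s (some a) s' *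
                VoptF (pM p piH θ1) (rM r piH θ1) k (h + 1) s'
                = lam * (∑ s' : S, pM p piH θ1 h s (some a) s' *
                    VoptF (pM p piH θ1) (rM r piH θ1) k (h + 1) s')
                  + (1 - lam) * (∑ s' : S, pM p piH θ1 h s none s' *
                    VoptF (pM p piH θ1) (rM r piH θ1) k (h + 1) s') := by
              rw [Finset.mul_sum, Finset.mul_sum, ← Finset.sum_add_distrib]
              refine Finset.sum_congr rfl fun s' _ => ?_
              rw [pM_couple p piH θ1 θ2 h s a lam s' hP]; ring
            have hcomb : rM r piH θ2 h s (some a) + ∑ s' : S, pM p piH θ2 h s (some a) s' *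
                VoptF (pM p piH θ1) (rM r piH θ1) k (h + 1) s'
                = lam * F (some a) + (1 - lam) * F none := by
              rw [hr', hsum, hF]; ring
            rw [hcomb]
            have h1 := hFle (some a)
            have h2 := hFle none
            nlinarith [hFle (some a), hFle none]
  intro s h hh1 hhH
  rw [Vstar_eq_VoptF H (pM p piH θ2) (rM r piH θ2) h s
      (fun h' hle hlt s b s' => hpMnn θ2 hθ2 h' (by omega) (by omega) s b s'),
    Vstar_eq_VoptF H (pM p piH θ1) (rM r piH θ1) h s
      (fun h' hle hlt s b s' => hpMnn θ1 hθ1 h' (by omega) (by omega) s b s')]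
  exact key (H + 1 - h) h hh1 (by omega) s
end

section
/- Advice gap of the penalized optimal policy: fix β > 0 and let π*_β be a deterministic Markov policy that is Bellman-optimal for the β-penalized machine MDP, i.e. π*_{h,β}(s) ∈ argmax_{a∈Ā} Q*_{h,β}(s,a) for all h ∈ {1,…,H} and s ∈ S. Then for every s ∈ S and h ∈ {1,…,H} such that π*_{h,β}(s) ≠ defer, one has Q*_h(s, π*_{h,β}(s)) − V^{π^H}_h(s) ≥ β. -/
open Finset

section Aux

variable {S B : Type*} [Fintype S]

lemma vfuel_le_fuel (P : ℕ → S → B → S → ℝ) (R : ℕ → S → B → ℝ) (pol : ℕ → S → B)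
    (k : ℕ) :
    ∀ (h : ℕ),
      (∀ j s, h ≤ j → j < h + k → R j s (pol j s) ≤ 1) →
      (∀ j s s', h ≤ j → j < h + k → 0 ≤ P j s (pol j s) s') →
      (∀ j s, h ≤ j → j < h + k → ∑ s' : S, P j s (pol j s) s' = 1) →
      ∀ s, Vfuel P R pol h k s ≤ (k : ℝ) := by
  induction k with
  | zero => intro h _ _ _ s; simp [Vfuel]
  | succ k ih =>
    intro h hR hP hPs s
    have step : ∀ s', Vfuel P R pol (h + 1) k s' ≤ (k : ℝ) :=
      ih (h + 1) (fun j s hj1 hj2 => hR j s (by omega) (by omega))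
        (fun j s s' hj1 hj2 => hP j s s' (by omega) (by omega))
        (fun j s hj1 hj2 => hPs j s (by omega) (by omega))
    simp only [Vfuel]
    have h2 : ∑ s' : S, P h s (pol h s) s' * Vfuel P R pol (h + 1) k s'
        ≤ ∑ s' : S, P h s (pol h s) s' * (k : ℝ) :=
      Finset.sum_le_sum fun s' _ =>
        mul_le_mul_of_nonneg_left (step s') (hP h s s' le_rfl (by omega))
    have h3 : ∑ s' : S, P h s (pol h s) s' * (k : ℝ) = (k : ℝ) := by
      rw [← Finset.sum_mul, hPs h s le_rfl (by omega), one_mul]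
    have h1 : R h s (pol h s) ≤ 1 := hR h s le_rfl (by omega)
    push_cast
    linarith

lemma vfuel_mono (P : ℕ → S → B → S → ℝ) (R R' : ℕ → S → B → ℝ) (pol : ℕ → S → B)
    (k : ℕ) :
    ∀ (h : ℕ),
      (∀ j s, h ≤ j → j < h + k → R j s (pol j s) ≤ R' j s (pol j s)) →
      (∀ j s s', h ≤ j → j < h + k → 0 ≤ P j s (pol j s) s') →
      ∀ s, Vfuel P R pol h k s ≤ Vfuel P R' pol h k s := by
  induction k with
  | zero => intro h _ _ s; simp [Vfuel]
  | succ k ih =>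
    intro h hR hP s
    have step : ∀ s', Vfuel P R pol (h + 1) k s' ≤ Vfuel P R' pol (h + 1) k s' :=
      ih (h + 1) (fun j s hj1 hj2 => hR j s (by omega) (by omega))
        (fun j s s' hj1 hj2 => hP j s s' (by omega) (by omega))
    simp only [Vfuel]
    have h2 : ∑ s' : S, P h s (pol h s) s' * Vfuel P R pol (h + 1) k s'
        ≤ ∑ s' : S, P h s (pol h s) s' * Vfuel P R' pol (h + 1) k s' :=
      Finset.sum_le_sum fun s' _ =>
        mul_le_mul_of_nonneg_left (step s') (hP h s s' le_rfl (by omega))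
    have h1 : R h s (pol h s) ≤ R' h s (pol h s) := hR h s le_rfl (by omega)
    linarith

lemma vfuel_congr (P : ℕ → S → B → S → ℝ) (R R' : ℕ → S → B → ℝ) (pol : ℕ → S → B)
    (hRR : ∀ j s, R j s (pol j s) = R' j s (pol j s)) (k : ℕ) :
    ∀ (h : ℕ) (s : S), Vfuel P R pol h k s = Vfuel P R' pol h k s := by
  induction k with
  | zero => intro h s; simp [Vfuel]
  | succ k ih =>
    intro h s
    simp only [Vfuel, hRR]
    congr 1
    exact Finset.sum_congr rfl fun s' _ => by rw [ih]

end Aux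

/-- Proposition 1: advice gap of the β-penalized optimal policy. -/
theorem advice_gap_of_penalized_optimal
    {S A : Type*} [Fintype S] [Fintype A] [Nonempty S] [Nonempty A] [DecidableEq A]
    (H : ℕ) (hH : 1 ≤ H)
    (p : ℕ → S → A → S → ℝ) (r : ℕ → S → A → ℝ) (piH : ℕ → S → A → ℝ)
    (hp : ∀ h, 1 ≤ h → h ≤ H → ∀ (s : S) (a : A),
      (∀ s' : S, 0 ≤ p h s a s') ∧ ∑ s' : S, p h s a s' = 1)
    (hr : ∀ h, 1 ≤ h → h ≤ H → ∀ (s : S) (a : A), 0 ≤ r h s a ∧ r h s a ≤ 1)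
    (hpiH : ∀ h, 1 ≤ h → h ≤ H → ∀ s : S,
      (∀ a : A, 0 ≤ piH h s a) ∧ ∑ a : A, piH h s a = 1)
    (hpiHlt : ∀ h, 1 ≤ h → h ≤ H → ∀ (s : S) (a : A), piH h s a < 1)
    (θ : S → A → ℝ) (hθ : ∀ (s : S) (a : A), 0 ≤ θ s a ∧ θ s a ≤ 1)
    (β : ℝ) (hβ : 0 < β)
    (polβ : ℕ → S → Option A)
    (hopt : ∀ h, 1 ≤ h → h ≤ H → ∀ (s : S) (a : Option A),
      Qstar H (pM p piH θ) (rMpen r piH θ β) h s a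
        ≤ Qstar H (pM p piH θ) (rMpen r piH θ β) h s (polβ h s)) :
    ∀ (s : S) (h : ℕ), 1 ≤ h → h ≤ H → polβ h s ≠ Option.none →
      β ≤ Qstar H (pM p piH θ) (rM r piH θ) h s (polβ h s)
            - Vval H (pM p piH θ) (rM r piH θ) deferPol h s := by
  classical
  set P := pM p piH θ with hPdef
  set Rm := rM r piH θ with hRmdef
  set Rp := rMpen r piH θ β with hRpdef
  -- basic facts about Pact
  have hPactn : ∀ j, 1 ≤ j → j ≤ H → ∀ (s : S) (aM : Option A) (a : A),
      0 ≤ Pact piH θ j s aM a := by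
    intro j hj1 hj2 s aM a
    cases aM with
    | none => exact (hpiH j hj1 hj2 s).1 a
    | some b =>
      simp only [Pact]
      split
      · exact (hθ s b).1
      · apply div_nonneg (mul_nonneg (by linarith [(hθ s b).2]) ((hpiH j hj1 hj2 s).1 a))
        linarith [hpiHlt j hj1 hj2 s b]
  have hPacts : ∀ j, 1 ≤ j → j ≤ H → ∀ (s : S) (aM : Option A),
      ∑ a : A, Pact piH θ j s aM a = 1 := by
    intro j hj1 hj2 s aM
    cases aM with
    | none => simpa [Pact] using (hpiH j hj1 hj2 s).2
    | some b =>
      have hlt := hpiHlt j hj1 hj2 s b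
      have hne : (1 : ℝ) - piH j s b ≠ 0 := by linarith
      simp only [Pact]
      rw [← Finset.add_sum_erase _ _ (Finset.mem_univ b), if_pos rfl]
      have he : ∑ a ∈ Finset.univ.erase b,
          (if a = b then θ s b else (1 - θ s b) * piH j s a / (1 - piH j s b))
          = ∑ a ∈ Finset.univ.erase b, (1 - θ s b) * piH j s a / (1 - piH j s b) :=
        Finset.sum_congr rfl fun a ha => by rw [if_neg (Finset.ne_of_mem_erase ha)]
      rw [he]
      have hsum : ∑ a ∈ Finset.univ.erase b, piH j s a = 1 - piH j s b := by
        rw [Finset.sum_erase_eq_sub (Finset.mem_univ b), (hpiH j hj1 hj2 s).2]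
      have hfac : ∑ a ∈ Finset.univ.erase b, (1 - θ s b) * piH j s a / (1 - piH j s b)
          = (1 - θ s b) * (∑ a ∈ Finset.univ.erase b, piH j s a) / (1 - piH j s b) := by
        rw [Finset.mul_sum, Finset.sum_div]
      rw [hfac, hsum, mul_div_assoc, div_self hne, mul_one]
      ring
  -- facts about the machine MDP
  have hPn : ∀ j, 1 ≤ j → j ≤ H → ∀ (s : S) (aM : Option A) (s' : S),
      0 ≤ P j s aM s' := by
    intro j hj1 hj2 s aM s'
    exact Finset.sum_nonneg fun a _ =>
      mul_nonneg ((hp j hj1 hj2 s a).1 s') (hPactn j hj1 hj2 s aM a)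
  have hPsum : ∀ j, 1 ≤ j → j ≤ H → ∀ (s : S) (aM : Option A),
      ∑ s' : S, P j s aM s' = 1 := by
    intro j hj1 hj2 s aM
    rw [hPdef]
    simp only [pM]
    rw [Finset.sum_comm]
    have hrow : ∀ a : A, ∑ s' : S, p j s a s' * Pact piH θ j s aM a
        = Pact piH θ j s aM a := by
      intro a
      rw [← Finset.sum_mul, (hp j hj1 hj2 s a).2, one_mul]
    simp only [hrow]
    exact hPacts j hj1 hj2 s aM
  have hRmle : ∀ j, 1 ≤ j → j ≤ H → ∀ (s : S) (aM : Option A), Rm j s aM ≤ 1 := by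
    intro j hj1 hj2 s aM
    rw [hRmdef]
    simp only [rM]
    calc ∑ a : A, r j s a * Pact piH θ j s aM a
        ≤ ∑ a : A, 1 * Pact piH θ j s aM a :=
          Finset.sum_le_sum fun a _ =>
            mul_le_mul_of_nonneg_right (hr j hj1 hj2 s a).2 (hPactn j hj1 hj2 s aM a)
      _ = 1 := by simp [hPacts j hj1 hj2 s aM]
  have hindn : ∀ aM : Option A, 0 ≤ indAdv aM := by
    intro aM; cases aM <;> simp [indAdv]
  have hRple : ∀ j, 1 ≤ j → j ≤ H → ∀ (s : S) (aM : Option A), Rp j s aM ≤ 1 := by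
    intro j hj1 hj2 s aM
    have h1 := hRmle j hj1 hj2 s aM
    have h2 : 0 ≤ β * indAdv aM := mul_nonneg hβ.le (hindn aM)
    rw [hRpdef]; simp only [rMpen]
    rw [← hRmdef]
    linarith
  have hRpm : ∀ j s (aM : Option A), Rp j s aM ≤ Rm j s aM := by
    intro j s aM
    have h2 : 0 ≤ β * indAdv aM := mul_nonneg hβ.le (hindn aM)
    rw [hRpdef]; simp only [rMpen]; rw [← hRmdef]; linarith
  -- bounded above
  have bddm : ∀ h', 1 ≤ h' → ∀ s' : S,
      BddAbove (Set.range fun pol : ℕ → S → Option A => Vval H P Rm pol h' s') := by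
    intro h' hh' s'
    refine ⟨((H + 1 - h' : ℕ) : ℝ), ?_⟩
    rintro x ⟨pol, rfl⟩
    exact vfuel_le_fuel P Rm pol (H + 1 - h') h'
      (fun j s hj1 hj2 => hRmle j (by omega) (by omega) s _)
      (fun j s s'' hj1 hj2 => hPn j (by omega) (by omega) s _ s'')
      (fun j s hj1 hj2 => hPsum j (by omega) (by omega) s _) s'
  have bddp : ∀ h', 1 ≤ h' → ∀ s' : S,
      BddAbove (Set.range fun pol : ℕ → S → Option A => Vval H P Rp pol h' s') := by
    intro h' hh' s'
    refine ⟨((H + 1 - h' : ℕ) : ℝ), ?_⟩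
    rintro x ⟨pol, rfl⟩
    exact vfuel_le_fuel P Rp pol (H + 1 - h') h'
      (fun j s hj1 hj2 => hRple j (by omega) (by omega) s _)
      (fun j s s'' hj1 hj2 => hPn j (by omega) (by omega) s _ s'')
      (fun j s hj1 hj2 => hPsum j (by omega) (by omega) s _) s'
  -- Vstar penalized ≤ Vstar
  have hVstarle : ∀ h', 1 ≤ h' → ∀ s' : S, Vstar H P Rp h' s' ≤ Vstar H P Rm h' s' := by
    intro h' hh' s'
    apply ciSup_le
    intro pol
    refine le_trans ?_ (le_ciSup (bddm h' hh' s') pol)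
    exact vfuel_mono P Rp Rm pol (H + 1 - h') h'
      (fun j s hj1 hj2 => hRpm j s _)
      (fun j s s'' hj1 hj2 => hPn j (by omega) (by omega) s _ s'') s'
  -- defer value ≤ penalized Vstar
  have hdefeq : ∀ h' (s' : S),
      Vval H P Rm deferPol h' s' = Vval H P Rp deferPol h' s' := by
    intro h' s'
    exact vfuel_congr P Rm Rp deferPol
      (fun j s => by
        rw [hRpdef, hRmdef]; simp [rMpen, indAdv, deferPol]) (H + 1 - h') h' s'
  have hdefle : ∀ h', 1 ≤ h' → ∀ s' : S,
      Vval H P Rm deferPol h' s' ≤ Vstar H P Rp h' s' := by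
    intro h' hh' s'
    rw [hdefeq h' s']
    exact le_ciSup (bddp h' hh' s') deferPol
  -- main argument
  intro s h h1 h2 hne
  obtain ⟨b, hb⟩ : ∃ b, polβ h s = some b := Option.ne_none_iff_exists'.mp hne
  have hk : H + 1 - h = (H - h) + 1 := by omega
  have hdec : Vval H P Rm deferPol h s
      = Rm h s Option.none
        + ∑ s' : S, P h s Option.none s' * Vval H P Rm deferPol (h + 1) s' := by
    rw [Vval, hk]
    simp only [Vfuel, deferPol]
    congr 1
    apply Finset.sum_congr rfl
    intro s' _
    congr 1
    rw [Vval]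
    congr 1
    omega
  have stepA : Vval H P Rm deferPol h s ≤ Qstar H P Rp h s Option.none := by
    rw [hdec, Qstar]
    have hRnone : Rp h s Option.none = Rm h s Option.none := by
      rw [hRpdef, hRmdef]; simp [rMpen, indAdv]
    rw [hRnone]
    have hmono : ∑ s' : S, P h s Option.none s' * Vval H P Rm deferPol (h + 1) s'
        ≤ ∑ s' : S, P h s Option.none s' * Vstar H P Rp (h + 1) s' :=
      Finset.sum_le_sum fun s' _ =>
        mul_le_mul_of_nonneg_left (hdefle (h + 1) (by omega) s') (hPn h h1 h2 s _ s')
    linarith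
  have stepB : Qstar H P Rp h s (polβ h s) ≤ Qstar H P Rm h s (polβ h s) - β := by
    rw [hb]
    simp only [Qstar]
    have hRsome : Rp h s (Option.some b) = Rm h s (Option.some b) - β := by
      rw [hRpdef, hRmdef]; simp [rMpen, indAdv]
    rw [hRsome]
    have hmono : ∑ s' : S, P h s (Option.some b) s' * Vstar H P Rp (h + 1) s'
        ≤ ∑ s' : S, P h s (Option.some b) s' * Vstar H P Rm (h + 1) s' :=
      Finset.sum_le_sum fun s' _ =>
        mul_le_mul_of_nonneg_left (hVstarle (h + 1) (by omega) s') (hPn h h1 h2 s _ s')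
    linarith
  have hmid := hopt h h1 h2 s Option.none
  linarith
end

section
/- A β-penalized optimal policy is optimal for the advice-budget-constrained problem at its own budget: let β ≥ 0, s1 ∈ S, and let π̂ be a deterministic Markov policy maximizing V^π_{1,β}(s1) over all deterministic Markov policies. Then for every deterministic Markov policy π with N^π_1(s1) ≤ N^{π̂}_1(s1), one has V^π_1(s1) ≤ V^{π̂}_1(s1). -/
open Finset

theorem Vfuel_sub {S B : Type*} [Fintype S] (P : ℕ → S → B → S → ℝ)
    (R1 R2 : ℕ → S → B → ℝ) (β : ℝ) (pol : ℕ → S → B) :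
    ∀ (k h : ℕ) (s : S),
      Vfuel P (fun h s b => R1 h s b - β * R2 h s b) pol h k s
        = Vfuel P R1 pol h k s - β * Vfuel P R2 pol h k s := by
  intro k
  induction k with
  | zero => intro h s; simp [Vfuel]
  | succ k ih =>
    intro h s
    simp only [Vfuel, ih]
    simp only [mul_sub, Finset.sum_sub_distrib, mul_add, Finset.mul_sum, mul_left_comm]
    ring

/-- a β-penalized optimal policy is optimal for the
advice-budget-constrained problem at its own budget. -/
theorem penalized_optimal_is_budget_optimal
    {S A : Type*} [Fintype S] [Fintype A] [Nonempty S] [Nonempty A] [DecidableEq A]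
    (H : ℕ) (hH : 1 ≤ H)
    (p : ℕ → S → A → S → ℝ) (r : ℕ → S → A → ℝ) (piH : ℕ → S → A → ℝ)
    (hp : ∀ h, 1 ≤ h → h ≤ H → ∀ (s : S) (a : A),
      (∀ s' : S, 0 ≤ p h s a s') ∧ ∑ s' : S, p h s a s' = 1)
    (hr : ∀ h, 1 ≤ h → h ≤ H → ∀ (s : S) (a : A), 0 ≤ r h s a ∧ r h s a ≤ 1)
    (hpiH : ∀ h, 1 ≤ h → h ≤ H → ∀ s : S,
      (∀ a : A, 0 ≤ piH h s a) ∧ ∑ a : A, piH h s a = 1)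
    (hpiHlt : ∀ h, 1 ≤ h → h ≤ H → ∀ (s : S) (a : A), piH h s a < 1)
    (θ : S → A → ℝ) (hθ : ∀ (s : S) (a : A), 0 ≤ θ s a ∧ θ s a ≤ 1)
    (β : ℝ) (hβ : 0 ≤ β) (s1 : S)
    (pihat : ℕ → S → Option A)
    (hopt : ∀ pol : ℕ → S → Option A,
      Vval H (pM p piH θ) (rMpen r piH θ β) pol 1 s1
        ≤ Vval H (pM p piH θ) (rMpen r piH θ β) pihat 1 s1) :
    ∀ pol : ℕ → S → Option A,
      Vval H (pM p piH θ) (fun _ _ aM => indAdv aM) pol 1 s1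
          ≤ Vval H (pM p piH θ) (fun _ _ aM => indAdv aM) pihat 1 s1 →
      Vval H (pM p piH θ) (rM r piH θ) pol 1 s1
        ≤ Vval H (pM p piH θ) (rM r piH θ) pihat 1 s1 := by
  intro pol hN
  have key : ∀ q : ℕ → S → Option A,
      Vval H (pM p piH θ) (rMpen r piH θ β) q 1 s1
        = Vval H (pM p piH θ) (rM r piH θ) q 1 s1
          - β * Vval H (pM p piH θ) (fun _ _ aM => indAdv aM) q 1 s1 := by
    intro q
    have : (rMpen r piH θ β)
        = fun h s aM => rM r piH θ h s aM - β * indAdv aM := by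
      funext h s aM; simp [rMpen]
    rw [this]
    exact Vfuel_sub _ _ _ _ _ _ _ _
  have h1 := hopt pol
  rw [key pol, key pihat] at h1
  nlinarith [mul_le_mul_of_nonneg_left hN hβ]
end

section
/- Affine dependence of the machine transition on the adherence level: for every h ∈ {1,…,H}, s, s' ∈ S and a ∈ A, setting ζ2 = (Σ_{a'≠a} p_h(s'|s,a')·π^H_h(a'|s))/(1−π^H_h(a|s)) and ζ1 = p_h(s'|s,a) − ζ2, the machine transition satisfies p^M_h(s'|s,a) = ζ1·θ(s,a) + ζ2. Consequently, if p̂^M denotes the machine transition built from the same environment kernel p and human policy π^H but with a different adherence level θ̄ : S×A → [0,1], then p^M_h(s'|s,a) − p̂^M_h(s'|s,a) = ζ1·(θ(s,a) − θ̄(s,a)); since ζ1 ∈ [−1,1], in particular |p^M_h(s'|s,a) − p̂^M_h(s'|s,a)| ≤ |θ(s,a) − θ̄(s,a)|. -/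
open Finset

/-- affine dependence of the machine transition on the adherence
level. -/
theorem machine_transition_affine_in_adherence
    {S A : Type*} [Fintype S] [Fintype A] [Nonempty S] [Nonempty A] [DecidableEq A]
    (H : ℕ) (hH : 1 ≤ H)
    (p : ℕ → S → A → S → ℝ) (piH : ℕ → S → A → ℝ)
    (hp : ∀ h, 1 ≤ h → h ≤ H → ∀ (s : S) (a : A),
      (∀ s' : S, 0 ≤ p h s a s') ∧ ∑ s' : S, p h s a s' = 1)
    (hpiH : ∀ h, 1 ≤ h → h ≤ H → ∀ s : S,
      (∀ a : A, 0 ≤ piH h s a) ∧ ∑ a : A, piH h s a = 1)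
    (hpiHlt : ∀ h, 1 ≤ h → h ≤ H → ∀ (s : S) (a : A), piH h s a < 1)
    (θ θbar : S → A → ℝ)
    (hθ : ∀ (s : S) (a : A), 0 ≤ θ s a ∧ θ s a ≤ 1)
    (hθbar : ∀ (s : S) (a : A), 0 ≤ θbar s a ∧ θbar s a ≤ 1) :
    ∀ h, 1 ≤ h → h ≤ H → ∀ (s s' : S) (a : A),
      let ζ2 : ℝ := (∑ a' ∈ Finset.univ.erase a, p h s a' s' * piH h s a') / (1 - piH h s a)
      let ζ1 : ℝ := p h s a s' - ζ2
      pM p piH θ h s (Option.some a) s' = ζ1 * θ s a + ζ2 ∧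
      pM p piH θ h s (Option.some a) s' - pM p piH θbar h s (Option.some a) s'
        = ζ1 * (θ s a - θbar s a) ∧
      |pM p piH θ h s (Option.some a) s' - pM p piH θbar h s (Option.some a) s'|
        ≤ |θ s a - θbar s a| := by
  
  intro h h1 h2 s s' a ζ2 ζ1
  have hden : 0 < 1 - piH h s a := by linarith [hpiHlt h h1 h2 s a]
  have hpinn := (hpiH h h1 h2 s).1
  have hpisum := (hpiH h h1 h2 s).2
  have hple : ∀ a' : A, p h s a' s' ≤ 1 := by
    intro a'
    calc p h s a' s' ≤ ∑ t : S, p h s a' t :=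
          Finset.single_le_sum (fun t _ => (hp h h1 h2 s a').1 t) (Finset.mem_univ s')
      _ = 1 := (hp h h1 h2 s a').2
  -- key affine formula for arbitrary adherence
  have key : ∀ τ : S → A → ℝ,
      pM p piH τ h s (Option.some a) s' = (p h s a s' - ζ2) * τ s a + ζ2 := by
    intro τ
    have hsplit : pM p piH τ h s (Option.some a) s'
        = p h s a s' * τ s a
          + ∑ a' ∈ Finset.univ.erase a,
              p h s a' s' * ((1 - τ s a) * piH h s a' / (1 - piH h s a)) := by
      rw [pM, ← Finset.add_sum_erase _ _ (Finset.mem_univ a)]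
      congr 1
      · simp [Pact]
      · apply Finset.sum_congr rfl
        intro a' ha'
        have : a' ≠ a := (Finset.mem_erase.1 ha').1
        simp [Pact, this]
    rw [hsplit]
    have : ∑ a' ∈ Finset.univ.erase a,
        p h s a' s' * ((1 - τ s a) * piH h s a' / (1 - piH h s a))
        = (∑ a' ∈ Finset.univ.erase a, p h s a' s' * piH h s a')
            * ((1 - τ s a) / (1 - piH h s a)) := by
      rw [Finset.sum_mul]
      apply Finset.sum_congr rfl
      intro a' _
      ring
    rw [this]
    show _ = (p h s a s' - (∑ a' ∈ Finset.univ.erase a, p h s a' s' * piH h s a')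
        / (1 - piH h s a)) * τ s a
        + (∑ a' ∈ Finset.univ.erase a, p h s a' s' * piH h s a') / (1 - piH h s a)
    field_simp
    ring
  have h1' := key θ
  have h2' := key θbar
  refine ⟨h1', ?_, ?_⟩
  · rw [h1', h2']; ring
  · rw [show pM p piH θ h s (Option.some a) s' - pM p piH θbar h s (Option.some a) s'
        = ζ1 * (θ s a - θbar s a) by rw [h1', h2']; ring]
    rw [abs_mul]
    have hz2nn : 0 ≤ ζ2 := by
      apply div_nonneg _ hden.le
      exact Finset.sum_nonneg fun a' _ => mul_nonneg ((hp h h1 h2 s a').1 s') (hpinn a')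
    have hz2le : ζ2 ≤ 1 := by
      rw [div_le_one hden]
      calc ∑ a' ∈ Finset.univ.erase a, p h s a' s' * piH h s a'
          ≤ ∑ a' ∈ Finset.univ.erase a, piH h s a' := by
            apply Finset.sum_le_sum
            intro a' _
            nlinarith [hple a', hpinn a', (hp h h1 h2 s a').1 s']
        _ = 1 - piH h s a := by
            rw [← hpisum, Finset.sum_erase_eq_sub (Finset.mem_univ a)]
    have hz1 : |ζ1| ≤ 1 := by
      rw [abs_le]
      constructor <;> [skip; skip] <;>
        simp only [ζ1] <;> nlinarith [(hp h h1 h2 s a).1 s', hple a]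
    calc |ζ1| * |θ s a - θbar s a| ≤ 1 * |θ s a - θbar s a| :=
          mul_le_mul_of_nonneg_right hz1 (abs_nonneg _)
      _ = _ := one_mul _
end

section
/- Variance-domination inequality: let ζ1, ζ2, θ ∈ ℝ satisfy ζ2 ∈ [0,1], ζ1 + ζ2 ∈ [0,1], ζ1 ∈ [−1,1] and θ ∈ [0,1]. Then |ζ1|·θ·(1−θ) ≤ (ζ1·θ + ζ2)·(1 − ζ1·θ − ζ2). Equivalently: for all q0, q1, θ ∈ [0,1], setting p = θ·q1 + (1−θ)·q0, one has |q1 − q0|·θ·(1−θ) ≤ p·(1−p). -/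
lemma vd_aux (q0 q1 t : ℝ) (h0l : 0 ≤ q0) (h0u : q0 ≤ 1) (h1l : 0 ≤ q1)
    (h1u : q1 ≤ 1) (htl : 0 ≤ t) (htu : t ≤ 1) :
    |q1 - q0| * t * (1 - t)
      ≤ (t * q1 + (1 - t) * q0) * (1 - (t * q1 + (1 - t) * q0)) := by
  rcases abs_cases (q1 - q0) with ⟨h, hd⟩ | ⟨h, hd⟩ <;> rw [h]
  · rcases lt_or_eq_of_le (show q1 - q0 ≤ 1 by linarith) with h1 | h1
    · have key : (1-(q1-q0)) * ((t * q1 + (1 - t) * q0)*(1-(t * q1 + (1 - t) * q0)) - (q1-q0)*t*(1-t))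
          = (q1-q0)*(t*(1-(q1-q0))-q0)^2 + q0*(1-q1) := by ring
      nlinarith [key, sub_pos.2 h1, mul_nonneg hd (sq_nonneg (t*(1-(q1-q0))-q0)),
        mul_nonneg h0l (sub_nonneg.2 h1u)]
    · have hq0 : q0 = 0 := by linarith
      have hq1 : q1 = 1 := by linarith
      subst hq0; subst hq1
      nlinarith [mul_nonneg htl (mul_nonneg htl (sub_nonneg.2 htu))]
  · rcases lt_or_eq_of_le (show q0 - q1 ≤ 1 by linarith) with h1 | h1
    · have key : (1-(q0-q1)) * ((t * q1 + (1 - t) * q0)*(1-(t * q1 + (1 - t) * q0)) - (-(q1-q0))*t*(1-t))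
          = (q0-q1)*((1-t)*(1-(q0-q1))-q1)^2 + q1*(1-q0) := by ring
      nlinarith [key, sub_pos.2 h1, mul_nonneg (show (0:ℝ) ≤ q0 - q1 by linarith) (sq_nonneg ((1-t)*(1-(q0-q1))-q1)),
        mul_nonneg h1l (sub_nonneg.2 h0u)]
    · have hq1 : q1 = 0 := by linarith
      have hq0 : q0 = 1 := by linarith
      subst hq0; subst hq1
      nlinarith [mul_nonneg htl (mul_nonneg htl (sub_nonneg.2 htu))]

/-- (variance-domination inequality), together with its equivalent
convex-combination form. -/
theorem variance_domination
    (ζ1 ζ2 θ : ℝ)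
    (hζ2l : 0 ≤ ζ2) (hζ2u : ζ2 ≤ 1)
    (hsuml : 0 ≤ ζ1 + ζ2) (hsumu : ζ1 + ζ2 ≤ 1)
    (hζ1l : -1 ≤ ζ1) (hζ1u : ζ1 ≤ 1)
    (hθl : 0 ≤ θ) (hθu : θ ≤ 1) :
    |ζ1| * θ * (1 - θ) ≤ (ζ1 * θ + ζ2) * (1 - ζ1 * θ - ζ2) ∧
    ∀ q0 q1 t : ℝ, 0 ≤ q0 → q0 ≤ 1 → 0 ≤ q1 → q1 ≤ 1 → 0 ≤ t → t ≤ 1 →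
      |q1 - q0| * t * (1 - t)
        ≤ (t * q1 + (1 - t) * q0) * (1 - (t * q1 + (1 - t) * q0)) := by
  constructor
  · have := vd_aux ζ2 (ζ1 + ζ2) θ hζ2l hζ2u hsuml hsumu hθl hθu
    have e : ζ1 + ζ2 - ζ2 = ζ1 := by ring
    rw [e] at this
    nlinarith [this]
  · exact fun q0 q1 t a b c d e f => vd_aux q0 q1 t a b c d e f
end

section
/- Bernstein-type transfer from adherence estimation error to machine-transition estimation error: let θ, θ̄ : S×A → [0,1] be two adherence levels and let p^M and p̂^M be the machine transition kernels built from the same environment kernel p and human policy π^H with adherence levels θ and θ̄, respectively. Fix (s,a) ∈ S×A, h ∈ {1,…,H}, a real L ≥ 0 and an integer n ≥ 2, and suppose |θ(s,a) − θ̄(s,a)| ≤ sqrt(8·θ̄(s,a)·(1−θ̄(s,a))·L/n) + 26·L/(3n−3). Then for every s' ∈ S, |p^M_h(s'|s,a) − p̂^M_h(s'|s,a)| ≤ sqrt(8·p̂^M_h(s'|s,a)·(1−p̂^M_h(s'|s,a))·L/n) + 26·L/(3n−3). -/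
open Finset

set_option maxHeartbeats 1000000 in
/-- Bernstein-type transfer from adherence estimation error to
machine-transition estimation error. -/
theorem bernstein_transfer
    {S A : Type*} [Fintype S] [Fintype A] [Nonempty S] [Nonempty A] [DecidableEq A]
    (H : ℕ) (hH : 1 ≤ H)
    (p : ℕ → S → A → S → ℝ) (piH : ℕ → S → A → ℝ)
    (hp : ∀ h, 1 ≤ h → h ≤ H → ∀ (s : S) (a : A),
      (∀ s' : S, 0 ≤ p h s a s') ∧ ∑ s' : S, p h s a s' = 1)
    (hpiH : ∀ h, 1 ≤ h → h ≤ H → ∀ s : S,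
      (∀ a : A, 0 ≤ piH h s a) ∧ ∑ a : A, piH h s a = 1)
    (hpiHlt : ∀ h, 1 ≤ h → h ≤ H → ∀ (s : S) (a : A), piH h s a < 1)
    (θ θbar : S → A → ℝ)
    (hθ : ∀ (s : S) (a : A), 0 ≤ θ s a ∧ θ s a ≤ 1)
    (hθbar : ∀ (s : S) (a : A), 0 ≤ θbar s a ∧ θbar s a ≤ 1)
    (s : S) (a : A) (h : ℕ) (hh1 : 1 ≤ h) (hh2 : h ≤ H)
    (L : ℝ) (hL : 0 ≤ L) (n : ℕ) (hn : 2 ≤ n)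
    (hest : |θ s a - θbar s a|
      ≤ Real.sqrt (8 * θbar s a * (1 - θbar s a) * L / n) + 26 * L / (3 * (n : ℝ) - 3)) :
    ∀ s' : S,
      |pM p piH θ h s (Option.some a) s' - pM p piH θbar h s (Option.some a) s'|
        ≤ Real.sqrt (8 * pM p piH θbar h s (Option.some a) s'
              * (1 - pM p piH θbar h s (Option.some a) s') * L / n)
          + 26 * L / (3 * (n : ℝ) - 3) := by
  intro s'
  obtain ⟨hpnn, hpsum⟩ := hp h hh1 hh2 s a
  obtain ⟨hπnn, hπsum⟩ := hpiH h hh1 hh2 s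
  have hπlt := hpiHlt h hh1 hh2 s a
  have hdenom : 0 < 1 - piH h s a := by linarith
  set x : ℝ := p h s a s' with hxdef
  set c : ℝ := ∑ a' ∈ Finset.univ.erase a, p h s a' s' * (piH h s a' / (1 - piH h s a))
    with hcdef
  have hform : ∀ t : S → A → ℝ, pM p piH t h s (Option.some a) s'
      = t s a * x + (1 - t s a) * c := by
    intro t
    rw [pM, ← Finset.add_sum_erase _ _ (Finset.mem_univ a)]
    have h1 : p h s a s' * Pact piH t h s (Option.some a) a = t s a * x := by
      simp [Pact, hxdef]; ring
    have h2 : ∑ a' ∈ Finset.univ.erase a, p h s a' s' * Pact piH t h s (Option.some a) a'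
        = (1 - t s a) * c := by
      rw [hcdef, Finset.mul_sum]
      apply Finset.sum_congr rfl
      intro a' ha'
      have hne : a' ≠ a := Finset.ne_of_mem_erase ha'
      simp only [Pact, if_neg hne]
      field_simp
    rw [h1, h2]
  have hx0 : 0 ≤ x := hpnn s'
  have hx1 : x ≤ 1 := by
    have := Finset.single_le_sum (f := fun s'' => p h s a s'') (fun s'' _ => hpnn s'')
      (Finset.mem_univ s')
    rw [hpsum] at this
    exact this
  have hc0 : 0 ≤ c := by
    apply Finset.sum_nonneg
    intro a' _
    exact mul_nonneg ((hp h hh1 hh2 s a').1 s') (div_nonneg (hπnn a') hdenom.le)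
  have hπerase : ∑ a' ∈ Finset.univ.erase a, piH h s a' = 1 - piH h s a := by
    have := Finset.add_sum_erase Finset.univ (piH h s) (Finset.mem_univ a)
    rw [hπsum] at this
    linarith
  have hc1 : c ≤ 1 := by
    have hle : c ≤ ∑ a' ∈ Finset.univ.erase a, piH h s a' / (1 - piH h s a) := by
      apply Finset.sum_le_sum
      intro a' _
      have hp1 : p h s a' s' ≤ 1 := by
        have := Finset.single_le_sum (f := fun s'' => p h s a' s'')
          (fun s'' _ => (hp h hh1 hh2 s a').1 s'') (Finset.mem_univ s')
        rw [(hp h hh1 hh2 s a').2] at this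
        exact this
      have h2 : 0 ≤ piH h s a' / (1 - piH h s a) := div_nonneg (hπnn a') hdenom.le
      nlinarith [(hp h hh1 hh2 s a').1 s']
    have : (∑ a' ∈ Finset.univ.erase a, piH h s a' / (1 - piH h s a)) = 1 := by
      rw [← Finset.sum_div, hπerase, div_self hdenom.ne']
    linarith
  obtain ⟨hθ0, hθ1⟩ := hθ s a
  obtain ⟨hθb0, hθb1⟩ := hθbar s a
  rw [hform θ, hform θbar]
  have hn2 : (2 : ℝ) ≤ (n : ℝ) := by exact_mod_cast hn
  have hnpos : (0 : ℝ) < (n : ℝ) := by linarith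
  have hCnn : 0 ≤ 26 * L / (3 * (n : ℝ) - 3) := by
    apply div_nonneg (by linarith) (by linarith)
  have hd0 : 0 ≤ |x - c| := abs_nonneg _
  have hd1 : |x - c| ≤ 1 := by
    rw [abs_le]; constructor <;> linarith
  have hkey : θ s a * x + (1 - θ s a) * c - (θbar s a * x + (1 - θbar s a) * c)
      = (θ s a - θbar s a) * (x - c) := by ring
  rw [hkey, abs_mul]
  have hA : 0 ≤ 8 * θbar s a * (1 - θbar s a) * L / n := by
    apply div_nonneg _ hnpos.le
    have : 0 ≤ θbar s a * (1 - θbar s a) := mul_nonneg hθb0 (by linarith)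
    nlinarith
  have hvar : θbar s a * (1 - θbar s a) * (x - c) ^ 2
      ≤ (θbar s a * x + (1 - θbar s a) * c)
        * (1 - (θbar s a * x + (1 - θbar s a) * c)) := by
    nlinarith [mul_nonneg hθb0 (mul_nonneg hx0 (by linarith : (0:ℝ) ≤ 1 - x)),
      mul_nonneg (by linarith : (0:ℝ) ≤ 1 - θbar s a)
        (mul_nonneg hc0 (by linarith : (0:ℝ) ≤ 1 - c))]
  calc |θ s a - θbar s a| * |x - c|
      ≤ (Real.sqrt (8 * θbar s a * (1 - θbar s a) * L / n)
          + 26 * L / (3 * (n : ℝ) - 3)) * |x - c| :=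
        mul_le_mul_of_nonneg_right hest hd0
    _ = Real.sqrt (8 * θbar s a * (1 - θbar s a) * L / n) * |x - c|
          + 26 * L / (3 * (n : ℝ) - 3) * |x - c| := by ring
    _ ≤ Real.sqrt (8 * (θbar s a * x + (1 - θbar s a) * c)
            * (1 - (θbar s a * x + (1 - θbar s a) * c)) * L / n)
          + 26 * L / (3 * (n : ℝ) - 3) := by
        have h1 : Real.sqrt (8 * θbar s a * (1 - θbar s a) * L / n) * |x - c|
            = Real.sqrt (8 * θbar s a * (1 - θbar s a) * L / n * |x - c| ^ 2) := by
          rw [Real.sqrt_mul hA, Real.sqrt_sq hd0]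
        have h2 : 8 * θbar s a * (1 - θbar s a) * L / n * |x - c| ^ 2
            ≤ 8 * (θbar s a * x + (1 - θbar s a) * c)
                * (1 - (θbar s a * x + (1 - θbar s a) * c)) * L / n := by
          rw [sq_abs]
          have h3 := mul_le_mul_of_nonneg_right hvar
            (show (0:ℝ) ≤ 8 * (L / n) by positivity)
          have e1 : 8 * θbar s a * (1 - θbar s a) * L / n * (x - c) ^ 2
              = θbar s a * (1 - θbar s a) * (x - c) ^ 2 * (8 * (L / n)) := by
            field_simp
          have e2 : 8 * (θbar s a * x + (1 - θbar s a) * c)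
                * (1 - (θbar s a * x + (1 - θbar s a) * c)) * L / n
              = (θbar s a * x + (1 - θbar s a) * c)
                * (1 - (θbar s a * x + (1 - θbar s a) * c)) * (8 * (L / n)) := by
            field_simp
          rw [e1, e2]; exact h3
        have h4 : 26 * L / (3 * (n : ℝ) - 3) * |x - c| ≤ 26 * L / (3 * (n : ℝ) - 3) :=
          mul_le_of_le_one_right hCnn hd1
        have h5 := Real.sqrt_le_sqrt h2
        rw [h1]
        linarith
end
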